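/- Let C be a uniformly random t-qubit Clifford and let P_Q be a random Pauli on k < t qubits whose probability of being the identity is at most 4^{-k}; extend it by identity to t qubits. Then Pr[C† (P_Q ⊗ I^{⊗(t−k)}) C is Z-type] ≤ 4^{-k} + 2^{-t}. The key inequality is 4^{-k} + (1 − 4^{-k})·(2^t − 1)/(4^t − 1) ≤ 4^{-k} + 2^{-t}. -/
import Mathlib


open scoped Classical
open Finset

/-- Let μ be the distribution of C† (P_Q ⊗ I^{⊗(t−k)}) C for a uniformly
random t-qubit Clifford C and a random k-qubit Pauli P_Q (k < t) with
Pr[P_Q = I] ≤ 4^{-k}: μ assigns the identity probability at most 4^{-k} and is uniform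
on the 4^t − 1 non-identity t-qubit Paulis. Then Pr[Z-type] ≤ 4^{-k} + 2^{-t}; the key
inequality is 4^{-k} + (1 − 4^{-k})·(2^t−1)/(4^t−1) ≤ 4^{-k} + 2^{-t}. -/
theorem stmt_8 (t k : ℕ) (hk : 1 ≤ k) (hkt : k < t) (μ : (Fin t → Fin 4) → ℝ)
    (hnn : ∀ P, 0 ≤ μ P) (hsum : ∑ P, μ P = 1)
    (hI : μ (fun _ => 0) ≤ (4 : ℝ) ^ (-(k : ℤ)))
    (hunif : ∀ W : Fin t → Fin 4, W ≠ (fun _ => 0) →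
      μ W = (1 - μ (fun _ => 0)) / ((4 : ℝ) ^ t - 1)) :
    (∑ W ∈ univ.filter (fun W : Fin t → Fin 4 => ∀ j, W j = 0 ∨ W j = 3), μ W) ≤
        (4 : ℝ) ^ (-(k : ℤ)) + (2 : ℝ) ^ (-(t : ℤ)) ∧
      (4 : ℝ) ^ (-(k : ℤ)) +
          (1 - (4 : ℝ) ^ (-(k : ℤ))) * ((2 : ℝ) ^ t - 1) / ((4 : ℝ) ^ t - 1) ≤
        (4 : ℝ) ^ (-(k : ℤ)) + (2 : ℝ) ^ (-(t : ℤ)) := by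
  have ht1 : 1 ≤ t := by omega
  have ht2 : (2 : ℝ) ≤ 2 ^ t := by
    calc (2 : ℝ) = 2 ^ 1 := (pow_one 2).symm
    _ ≤ 2 ^ t := pow_le_pow_right₀ one_le_two ht1
  have h4 : (4 : ℝ) ^ t = (2 ^ t) * (2 ^ t) := by
    rw [← mul_pow]; norm_num
  have h4pos : (0 : ℝ) < (4 : ℝ) ^ t - 1 := by nlinarith
  set A := (4 : ℝ) ^ (-(k : ℤ)) with hA
  set μ0 := μ (fun _ => 0) with hμ0
  have hμ0nn : 0 ≤ μ0 := hnn _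
  have hμ0le1 : μ0 ≤ 1 := by
    rw [← hsum]
    exact Finset.single_le_sum (fun P _ => hnn P) (mem_univ _)
  have hAnn : (0 : ℝ) ≤ A := by positivity
  have hA1 : A ≤ 1 := by
    rw [hA, zpow_neg]
    apply inv_le_one_of_one_le₀
    exact one_le_pow₀ (by norm_num)
  have h2t : (2 : ℝ) ^ (-(t : ℤ)) = ((2 : ℝ) ^ t)⁻¹ := by
    rw [zpow_neg]; norm_num
  have h2tpos : (0 : ℝ) < (2 : ℝ) ^ t := by positivity
  -- r ≤ 2^{-t}
  have hr : ((2 : ℝ) ^ t - 1) / ((4 : ℝ) ^ t - 1) ≤ (2 : ℝ) ^ (-(t : ℤ)) := by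
    rw [h2t, div_le_iff₀ h4pos, inv_mul_eq_div, le_div_iff₀ h2tpos]
    nlinarith
  have hrnn : (0 : ℝ) ≤ ((2 : ℝ) ^ t - 1) / ((4 : ℝ) ^ t - 1) := by
    apply div_nonneg _ (le_of_lt h4pos); linarith
  -- key inequality
  have key : A + (1 - A) * ((2 : ℝ) ^ t - 1) / ((4 : ℝ) ^ t - 1) ≤
      A + (2 : ℝ) ^ (-(t : ℤ)) := by
    have h1 : (1 - A) * ((2 : ℝ) ^ t - 1) / ((4 : ℝ) ^ t - 1)
        ≤ ((2 : ℝ) ^ t - 1) / ((4 : ℝ) ^ t - 1) := by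
      rw [mul_div_assoc]
      nlinarith
    linarith
  refine ⟨?_, key⟩
  -- cardinality of the Z-type set
  have hS : univ.filter (fun W : Fin t → Fin 4 => ∀ j, W j = 0 ∨ W j = 3)
      = Fintype.piFinset (fun _ : Fin t => ({0, 3} : Finset (Fin 4))) := by
    ext W
    simp [Fintype.mem_piFinset]
  have hcard : (univ.filter (fun W : Fin t → Fin 4 => ∀ j, W j = 0 ∨ W j = 3)).card
      = 2 ^ t := by
    rw [hS, Fintype.card_piFinset]
    simp
  have hmem : (fun _ => (0 : Fin 4)) ∈
      univ.filter (fun W : Fin t → Fin 4 => ∀ j, W j = 0 ∨ W j = 3) := by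
    simp
  have hsumS : (∑ W ∈ univ.filter (fun W : Fin t → Fin 4 => ∀ j, W j = 0 ∨ W j = 3), μ W)
      = μ0 + ((2 : ℝ) ^ t - 1) * ((1 - μ0) / ((4 : ℝ) ^ t - 1)) := by
    rw [← Finset.add_sum_erase _ _ hmem]
    congr 1
    rw [Finset.sum_congr rfl (fun W hW => hunif W (by
      simp only [Finset.mem_erase] at hW
      exact hW.1))]
    rw [Finset.sum_const, Finset.card_erase_of_mem hmem, hcard, nsmul_eq_mul]
    have : ((2 ^ t - 1 : ℕ) : ℝ) = (2 : ℝ) ^ t - 1 := by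
      push_cast [Nat.one_le_two_pow]
      ring
    rw [this]
  rw [hsumS]
  -- monotonicity in μ0
  have mono : μ0 + ((2 : ℝ) ^ t - 1) * ((1 - μ0) / ((4 : ℝ) ^ t - 1))
      ≤ A + (1 - A) * ((2 : ℝ) ^ t - 1) / ((4 : ℝ) ^ t - 1) := by
    have hrlt1 : ((2 : ℝ) ^ t - 1) / ((4 : ℝ) ^ t - 1) < 1 := by
      rw [div_lt_one h4pos]; nlinarith
    have e1 : μ0 + ((2 : ℝ) ^ t - 1) * ((1 - μ0) / ((4 : ℝ) ^ t - 1))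
        = μ0 * (1 - ((2 : ℝ) ^ t - 1) / ((4 : ℝ) ^ t - 1))
          + ((2 : ℝ) ^ t - 1) / ((4 : ℝ) ^ t - 1) := by
      field_simp; ring
    have e2 : A + (1 - A) * ((2 : ℝ) ^ t - 1) / ((4 : ℝ) ^ t - 1)
        = A * (1 - ((2 : ℝ) ^ t - 1) / ((4 : ℝ) ^ t - 1))
          + ((2 : ℝ) ^ t - 1) / ((4 : ℝ) ^ t - 1) := by
      field_simp; ring
    rw [e1, e2]
    have := hI
    nlinarith
  linarith
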